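/- Let n ≥ 1 be an integer and let h : {0,1,…,n} → ℝ satisfy h(0) = 0, h(n) = 1, and h(r) = (r/n)·h(r+1) + ((n−r)/n)·h(r−1) for every integer r with 1 ≤ r ≤ n−1. Then for every integer r with 0 ≤ r ≤ n, h(r) = (1/2)^(n−1) · ∑_{j=1}^{r} C(n−1, j−1), where C(a,b) denotes the binomial coefficient. -/

import Mathlib

theorem contractExtremes_winner_distribution
    (n : ℕ) (hn : 1 ≤ n) (h : ℕ → ℝ)
    (h0 : h 0 = 0) (hN : h n = 1)
    (hrec : ∀ r : ℕ, 1 ≤ r → r ≤ n - 1 →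
      h r = ((r : ℝ) / n) * h (r + 1) + (((n : ℝ) - r) / n) * h (r - 1)) :
    ∀ r : ℕ, r ≤ n →
      h r = (1 / 2 : ℝ) ^ (n - 1) *
        ∑ j ∈ Finset.Icc 1 r, ((n - 1).choose (j - 1) : ℝ) := by
  have hn0 : (n : ℝ) ≠ 0 := Nat.cast_ne_zero.mpr (by omega)
  have hdiff : ∀ r : ℕ, 1 ≤ r → r ≤ n →
      h r - h (r - 1) = h 1 * ((n - 1).choose (r - 1) : ℝ) := by
    intro r
    induction r with
    | zero => omega
    | succ r ih =>
      intro _ hrn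
      simp only [Nat.add_sub_cancel]
      rcases Nat.eq_zero_or_pos r with hr0 | hr1
      · subst hr0; simp [h0]
      · have hrec' := hrec r hr1 (by omega)
        have ihd := ih hr1 (by omega)
        have hrR : (r : ℝ) ≠ 0 := Nat.cast_ne_zero.mpr (by omega)
        have key : (r : ℝ) * (h (r + 1) - h r) = ((n : ℝ) - r) * (h r - h (r - 1)) := by
          field_simp at hrec'
          linear_combination -hrec'
        have hch : ((n - 1).choose r : ℝ) * r = ((n - 1).choose (r - 1) : ℝ) * ((n : ℝ) - r) := by
          have hid := Nat.choose_succ_right_eq (n - 1) (r - 1)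
          have e1 : r - 1 + 1 = r := by omega
          have e2 : n - 1 - (r - 1) = n - r := by omega
          rw [e1, e2] at hid
          have : (((n - 1).choose r : ℕ) : ℝ) * ((r : ℕ) : ℝ)
              = (((n - 1).choose (r - 1) : ℕ) : ℝ) * (((n - r : ℕ)) : ℝ) := by
            exact_mod_cast congrArg (fun x : ℕ => (x : ℝ)) hid
          rwa [Nat.cast_sub (by omega : r ≤ n)] at this
        have main : (r : ℝ) * (h (r + 1) - h r) = (r : ℝ) * (h 1 * ((n - 1).choose r : ℝ)) := by
          rw [key, ihd]
          linear_combination (-(h 1)) * hch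
        exact mul_left_cancel₀ hrR main
  have hsum : ∀ r : ℕ, r ≤ n →
      h r = h 1 * ∑ j ∈ Finset.Icc 1 r, ((n - 1).choose (j - 1) : ℝ) := by
    intro r
    induction r with
    | zero => intro _; simp [h0]
    | succ r ih =>
      intro hrn
      have hd := hdiff (r + 1) (by omega) hrn
      have hr := ih (by omega)
      rw [Finset.sum_Icc_succ_top (by omega : 1 ≤ r + 1), mul_add]
      simp only [Nat.add_sub_cancel] at hd ⊢
      linarith
  have hS : ∑ j ∈ Finset.Icc 1 n, ((n - 1).choose (j - 1) : ℝ) = 2 ^ (n - 1) := by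
    have reindex : ∀ m : ℕ, ∑ j ∈ Finset.Icc 1 m, ((n - 1).choose (j - 1) : ℝ)
        = ∑ k ∈ Finset.range m, ((n - 1).choose k : ℝ) := by
      intro m
      induction m with
      | zero => simp
      | succ m ih =>
        rw [Finset.sum_Icc_succ_top (by omega : 1 ≤ m + 1), ih, Finset.sum_range_succ]
        simp
    rw [reindex n]
    have hm : n = (n - 1) + 1 := by omega
    have := Nat.sum_range_choose (n - 1)
    calc ∑ k ∈ Finset.range n, ((n - 1).choose k : ℝ)
        = ∑ k ∈ Finset.range ((n - 1) + 1), ((n - 1).choose k : ℝ) := by rw [← hm]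
      _ = ((∑ k ∈ Finset.range ((n - 1) + 1), (n - 1).choose k : ℕ) : ℝ) := by push_cast; ring
      _ = ((2 ^ (n - 1) : ℕ) : ℝ) := by rw [this]
      _ = 2 ^ (n - 1) := by push_cast; ring
  have h1v : h 1 = (1 / 2 : ℝ) ^ (n - 1) := by
    have := hsum n le_rfl
    rw [hN, hS] at this
    have h2 : (2 : ℝ) ^ (n - 1) ≠ 0 := by positivity
    field_simp at this ⊢
    rw [one_div_pow, eq_div_iff h2]
    linarith
  intro r hr
  rw [hsum r hr, h1v]
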